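/- Let φ(z) = z² + z and α > 0 rational, with φⁿ(α) = Aₙ/Bₙ in lowest terms (Aₙ, Bₙ > 0). Then for all n ≥ 1, Aₙ₋₁ + Bₙ₋₁ > 1, and hence any prime divisor of Aₙ₋₁ + Bₙ₋₁ is a prime dividing Aₙ = Aₙ₋₁(Aₙ₋₁ + Bₙ₋₁) that does not divide Aₙ₋₁. -/

import Mathlib

lemma aux_num_den (q : ℚ) :
    (q ^ 2 + q).num = q.num * (q.num + q.den) := by
  have hcop : IsCoprime q.num (q.den : ℤ) :=
    Int.isCoprime_iff_gcd_eq_one.mpr q.reduced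
  have hcop2 : IsCoprime (q.num * (q.num + (q.den : ℤ))) ((q.den : ℤ) ^ 2) := by
    have h1 : IsCoprime (q.num + (q.den : ℤ)) (q.den : ℤ) := by
      have := hcop.add_mul_right_left 1
      simpa using this
    exact (hcop.mul_left h1).pow_right
  have hd : (q.den : ℤ) ^ 2 ≠ 0 := by positivity
  have hden0 : (q.den : ℚ) ≠ 0 := by exact_mod_cast q.den_ne_zero
  have key : q ^ 2 + q = (↑(q.num * (q.num + (q.den : ℤ))) : ℚ) / ((q.den : ℤ) ^ 2 : ℤ) := by
    rw [eq_div_iff (by exact_mod_cast hd)]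
    push_cast
    rw [show (q.num : ℚ) = q * q.den from by rw [Rat.mul_den_eq_num]]
    ring
  have hnd : Nat.Coprime (q.num * (q.num + (q.den : ℤ))).natAbs ((q.den : ℤ) ^ 2).natAbs := by
    have := Int.isCoprime_iff_gcd_eq_one.mp hcop2
    simpa [Int.gcd] using this
  have := Rat.num_div_eq_of_coprime (a := q.num * (q.num + (q.den : ℤ)))
    (b := (q.den : ℤ) ^ 2) (by positivity) (by simpa [Int.natAbs_pow] using hnd)
  rw [key]
  push_cast at this ⊢
  exact this

theorem stmt17 (α : ℚ) (hα : 0 < α) (n : ℕ) (hn : 1 ≤ n) :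
    1 < ((fun z : ℚ => z ^ 2 + z)^[n - 1] α).num
          + (((fun z : ℚ => z ^ 2 + z)^[n - 1] α).den : ℤ) ∧
    ((fun z : ℚ => z ^ 2 + z)^[n] α).num
      = ((fun z : ℚ => z ^ 2 + z)^[n - 1] α).num
          * (((fun z : ℚ => z ^ 2 + z)^[n - 1] α).num
              + (((fun z : ℚ => z ^ 2 + z)^[n - 1] α).den : ℤ)) ∧
    ∀ p : ℕ, p.Prime →
      (p : ℤ) ∣ ((fun z : ℚ => z ^ 2 + z)^[n - 1] α).num
                  + (((fun z : ℚ => z ^ 2 + z)^[n - 1] α).den : ℤ) →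
      (p : ℤ) ∣ ((fun z : ℚ => z ^ 2 + z)^[n] α).num ∧
      ¬ (p : ℤ) ∣ ((fun z : ℚ => z ^ 2 + z)^[n - 1] α).num := by
  set f : ℚ → ℚ := fun z : ℚ => z ^ 2 + z with hf
  set q : ℚ := f^[n - 1] α with hq
  have hqpos : 0 < q := by
    rw [hq]
    induction n - 1 with
    | zero => simpa using hα
    | succ k ih =>
      rw [Function.iterate_succ_apply']
      have : 0 < f^[k] α := ih
      simp only [hf]
      positivity
  have hnum : 0 < q.num := Rat.num_pos.mpr hqpos
  have hden : 1 ≤ (q.den : ℤ) := by exact_mod_cast q.pos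
  have h1 : 1 < q.num + (q.den : ℤ) := by omega
  have hiter : f^[n] α = f q := by
    obtain ⟨m, rfl⟩ : ∃ m, n = m + 1 := ⟨n - 1, by omega⟩
    rw [hq, Function.iterate_succ_apply']
    simp
  have h2 : (f^[n] α).num = q.num * (q.num + (q.den : ℤ)) := by
    rw [hiter]
    exact aux_num_den q
  refine ⟨h1, h2, fun p hp hpdvd => ?_⟩
  constructor
  · rw [h2]; exact Dvd.dvd.mul_left hpdvd q.num
  · intro hpa
    have hcop : IsCoprime q.num (q.den : ℤ) :=
      Int.isCoprime_iff_gcd_eq_one.mpr q.reduced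
    have hpd : (p : ℤ) ∣ (q.den : ℤ) := by have := dvd_sub hpdvd hpa; simpa using this
    have := Int.isCoprime_iff_gcd_eq_one.mp hcop
    have hpg : (p : ℤ) ∣ 1 := by
      have := Int.dvd_coe_gcd hpa hpd
      rwa [Int.isCoprime_iff_gcd_eq_one.mp hcop] at this
    have := Int.le_of_dvd one_pos hpg
    have := hp.two_le
    omega
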